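/- Let X_L and X_R be disjoint subsets of V and X_t = X_L ∪ X_R. For assignments a : X_L → {0,1} and b : X_R → {0,1}, let z : X_t → {0,1} agree with a on X_L and with b on X_R, and let χ ∈ {0,1} ⊆ ℕ be the parity of the number of edges {u,v} of G with u ∈ X_L, v ∈ X_R and a_u = b_v = 1. Then φ_{X_t}(z) = φ_{X_L}(a) + φ_{X_R}(b) + η·χ in ZMod r. -/
import Mathlib


open Classical

/-- `m_X(z)`: the number of edges `{u,v}` of `G` with both endpoints in `X` and both
selected by the 0/1 assignment `z`. -/
noncomputable def mX {V : Type*} [Fintype V] (G : SimpleGraph V) (X : Finset V)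
    (z : {v // v ∈ X} → Bool) : ℕ :=
  Nat.card {e : Sym2 V // e ∈ G.edgeSet ∧ ∀ v ∈ e, ∃ h : v ∈ X, z ⟨v, h⟩ = true}

/-- The internal residue `φ_X(z) = Σ_{v∈X} b_v·z_v + η·m_X(z)` in `ZMod r`, with `η = r/2`. -/
noncomputable def phiX {V : Type*} [Fintype V] (G : SimpleGraph V) (r : ℕ)
    (bc : V → ZMod r) (X : Finset V) (z : {v // v ∈ X} → Bool) : ZMod r :=
  (∑ v : {v // v ∈ X}, bc v.1 * (if z v then 1 else 0))
    + ((r / 2 : ℕ) : ZMod r) * (mX G X z : ZMod r)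

lemma mX_eq_card {V : Type*} [Fintype V] [DecidableEq V] (G : SimpleGraph V) (X : Finset V)
    (z : {v // v ∈ X} → Bool) :
    mX G X z = (Finset.univ.filter (fun e : Sym2 V =>
      e ∈ G.edgeSet ∧ ∀ v ∈ e, ∃ h : v ∈ X, z ⟨v, h⟩ = true)).card := by
  rw [mX, Nat.card_eq_fintype_card, Fintype.card_subtype]

lemma mX_split {V : Type*} [Fintype V] [DecidableEq V]
    (G : SimpleGraph V) (XL XR : Finset V) (hdisj : Disjoint XL XR)
    (a : {v // v ∈ XL} → Bool) (b : {v // v ∈ XR} → Bool)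
    (z : {v // v ∈ XL ∪ XR} → Bool)
    (hza : ∀ (v : V) (h : v ∈ XL), z ⟨v, Finset.mem_union_left XR h⟩ = a ⟨v, h⟩)
    (hzb : ∀ (v : V) (h : v ∈ XR), z ⟨v, Finset.mem_union_right XL h⟩ = b ⟨v, h⟩) :
    mX G (XL ∪ XR) z = mX G XL a + mX G XR b +
      (Finset.univ.filter (fun p : {v // v ∈ XL} × {v // v ∈ XR} =>
        G.Adj p.1.1 p.2.1 ∧ a p.1 = true ∧ b p.2 = true)).card := by
  classical
  rw [mX_eq_card, mX_eq_card, mX_eq_card]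
  set PL : Sym2 V → Prop := fun e => e ∈ G.edgeSet ∧ ∀ v ∈ e, ∃ h : v ∈ XL, a ⟨v, h⟩ = true with hPL
  set PR : Sym2 V → Prop := fun e => e ∈ G.edgeSet ∧ ∀ v ∈ e, ∃ h : v ∈ XR, b ⟨v, h⟩ = true with hPR
  set Pc : Sym2 V → Prop := fun e => ∃ (u : {v // v ∈ XL}) (w : {v // v ∈ XR}),
      G.Adj u.1 w.1 ∧ a u = true ∧ b w = true ∧ e = s(u.1, w.1) with hPc
  -- decomposition
  have hdecomp : (Finset.univ.filter (fun e : Sym2 V =>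
      e ∈ G.edgeSet ∧ ∀ v ∈ e, ∃ h : v ∈ XL ∪ XR, z ⟨v, h⟩ = true))
      = (Finset.univ.filter PL ∪ Finset.univ.filter PR) ∪ Finset.univ.filter Pc := by
    ext e
    induction e using Sym2.ind with
    | _ u v =>
      rw [Finset.mem_union, Finset.mem_union]
      simp only [Finset.mem_filter, Finset.mem_univ, true_and, hPL, hPR, hPc]
      constructor
      · rintro ⟨he, hsel⟩
        have hadj : G.Adj u v := he
        obtain ⟨hu, hu1⟩ := hsel u (Sym2.mem_mk_left u v)
        obtain ⟨hv, hv1⟩ := hsel v (Sym2.mem_mk_right u v)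
        rcases Finset.mem_union.mp hu with huL | huR <;> rcases Finset.mem_union.mp hv with hvL | hvR
        · left; left
          refine ⟨he, ?_⟩
          intro w hw
          rcases Sym2.mem_iff.mp hw with rfl | rfl
          · exact ⟨huL, by rw [← hza w huL]; convert hu1⟩
          · exact ⟨hvL, by rw [← hza w hvL]; convert hv1⟩
        · right
          exact ⟨⟨u, huL⟩, ⟨v, hvR⟩, hadj,
            by rw [← hza u huL]; convert hu1,
            by rw [← hzb v hvR]; convert hv1, rfl⟩
        · right
          refine ⟨⟨v, hvL⟩, ⟨u, huR⟩, hadj.symm,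
            by rw [← hza v hvL]; convert hv1,
            by rw [← hzb u huR]; convert hu1, Sym2.eq_swap⟩
        · left; right
          refine ⟨he, ?_⟩
          intro w hw
          rcases Sym2.mem_iff.mp hw with rfl | rfl
          · exact ⟨huR, by rw [← hzb w huR]; convert hu1⟩
          · exact ⟨hvR, by rw [← hzb w hvR]; convert hv1⟩
      · intro hcase
        rcases hcase with (h1 | h1) | hc
        · obtain ⟨he, hsel⟩ := h1
          refine ⟨he, fun w hw => ?_⟩
          obtain ⟨h, h1'⟩ := hsel w hw
          exact ⟨Finset.mem_union_left XR h, by rw [hza w h]; exact h1'⟩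
        · obtain ⟨he, hsel⟩ := h1
          refine ⟨he, fun w hw => ?_⟩
          obtain ⟨h, h1'⟩ := hsel w hw
          exact ⟨Finset.mem_union_right XL h, by rw [hzb w h]; exact h1'⟩
        · obtain ⟨⟨x, hx⟩, ⟨y, hy⟩, hadj, hax, hby, heq⟩ := hc
          rw [heq]
          refine ⟨hadj, fun w hw => ?_⟩
          rcases Sym2.mem_iff.mp hw with rfl | rfl
          · exact ⟨Finset.mem_union_left XR hx, by rw [hza _ hx]; simpa using hax⟩
          · exact ⟨Finset.mem_union_right XL hy, by rw [hzb _ hy]; simpa using hby⟩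
  rw [hdecomp]
  -- disjointness facts
  have hnot : ∀ x : V, x ∈ XL → x ∈ XR → False := fun x h1 h2 =>
    Finset.disjoint_left.mp hdisj h1 h2
  have hd1 : Disjoint (Finset.univ.filter PL) (Finset.univ.filter PR) := by
    rw [Finset.disjoint_left]
    intro e h1 h2
    simp only [Finset.mem_filter, Finset.mem_univ, true_and] at h1 h2
    induction e using Sym2.ind with
    | _ u v =>
      obtain ⟨hu, -⟩ := h1.2 u (Sym2.mem_mk_left u v)
      obtain ⟨hu', -⟩ := h2.2 u (Sym2.mem_mk_left u v)
      exact hnot u hu hu'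
  have hd2 : Disjoint (Finset.univ.filter PL ∪ Finset.univ.filter PR)
      (Finset.univ.filter Pc) := by
    rw [Finset.disjoint_left]
    intro e h1 h2
    simp only [Finset.mem_filter, Finset.mem_union, Finset.mem_univ, true_and] at h1 h2
    obtain ⟨x, y, hadj, hax, hby, rfl⟩ := h2
    rcases h1 with ⟨-, hsel⟩ | ⟨-, hsel⟩
    · obtain ⟨h, -⟩ := hsel y.1 (Sym2.mem_mk_right _ _)
      exact hnot y.1 h y.2
    · obtain ⟨h, -⟩ := hsel x.1 (Sym2.mem_mk_left _ _)
      exact hnot x.1 x.2 h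
  rw [Finset.card_union_of_disjoint hd2, Finset.card_union_of_disjoint hd1]
  congr 1
  -- cross part bijection
  refine (Finset.card_bij (fun p _ => s(p.1.1, p.2.1)) ?_ ?_ ?_).symm
  · intro p hp
    simp only [Finset.mem_filter, Finset.mem_univ, true_and] at hp ⊢
    exact ⟨p.1, p.2, hp.1, hp.2.1, hp.2.2, rfl⟩
  · intro p hp q hq heq
    rw [Sym2.eq_iff] at heq
    rcases heq with ⟨h1, h2⟩ | ⟨h1, h2⟩
    · exact Prod.ext (Subtype.ext h1) (Subtype.ext h2)
    · have hmem : (p.1.1 : V) ∈ XR := by rw [h1]; exact q.2.2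
      exact absurd hmem (fun h => hnot _ p.1.2 h)
  · intro e he
    simp only [Finset.mem_filter, Finset.mem_univ, true_and] at he
    obtain ⟨x, y, hadj, hax, hby, rfl⟩ := he
    exact ⟨(x, y), by simp [hadj, hax, hby], rfl⟩

lemma sum_split {V : Type*} [Fintype V] [DecidableEq V] {r : ℕ}
    (bc : V → ZMod r) (XL XR : Finset V) (hdisj : Disjoint XL XR)
    (a : {v // v ∈ XL} → Bool) (b : {v // v ∈ XR} → Bool)
    (z : {v // v ∈ XL ∪ XR} → Bool)
    (hza : ∀ (v : V) (h : v ∈ XL), z ⟨v, Finset.mem_union_left XR h⟩ = a ⟨v, h⟩)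
    (hzb : ∀ (v : V) (h : v ∈ XR), z ⟨v, Finset.mem_union_right XL h⟩ = b ⟨v, h⟩) :
    (∑ v : {v // v ∈ XL ∪ XR}, bc v.1 * (if z v then 1 else 0))
      = (∑ v : {v // v ∈ XL}, bc v.1 * (if a v then 1 else 0))
        + (∑ v : {v // v ∈ XR}, bc v.1 * (if b v then 1 else 0)) := by
  classical
  set F : V → ZMod r := fun v =>
    if h : v ∈ XL ∪ XR then bc v * (if z ⟨v, h⟩ then 1 else 0) else 0 with hF
  have h1 : (∑ v : {v // v ∈ XL ∪ XR}, bc v.1 * (if z v then 1 else 0))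
      = ∑ v ∈ XL ∪ XR, F v := by
    rw [← Finset.sum_attach (XL ∪ XR) F]
    refine Finset.sum_congr rfl fun v _ => ?_
    have hv := Finset.mem_union.mp v.2
    simp [hF, v.2, hv]
  have h2 : (∑ v ∈ XL, F v)
      = ∑ v : {v // v ∈ XL}, bc v.1 * (if a v then 1 else 0) := by
    rw [← Finset.sum_attach XL F]
    refine Finset.sum_congr rfl fun v _ => ?_
    have hm : (v : V) ∈ XL ∪ XR := Finset.mem_union_left XR v.2
    simp only [hF, dif_pos hm]
    rw [show z ⟨v.1, hm⟩ = a ⟨v.1, v.2⟩ from hza v.1 v.2]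
  have h3 : (∑ v ∈ XR, F v)
      = ∑ v : {v // v ∈ XR}, bc v.1 * (if b v then 1 else 0) := by
    rw [← Finset.sum_attach XR F]
    refine Finset.sum_congr rfl fun v _ => ?_
    have hm : (v : V) ∈ XL ∪ XR := Finset.mem_union_right XL v.2
    simp only [hF, dif_pos hm]
    rw [show z ⟨v.1, hm⟩ = b ⟨v.1, v.2⟩ from hzb v.1 v.2]
  rw [h1, Finset.sum_union hdisj, h2, h3]

lemma eta_mod2 {r : ℕ} (hre : Even r) (c : ℕ) :
    ((r / 2 : ℕ) : ZMod r) * (c : ZMod r)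
      = ((r / 2 : ℕ) : ZMod r) * ((c % 2 : ℕ) : ZMod r) := by
  have h2 : ((r / 2 : ℕ) : ZMod r) * 2 = 0 := by
    have hd : (r / 2) * 2 = r := Nat.div_mul_cancel hre.two_dvd
    calc ((r / 2 : ℕ) : ZMod r) * 2 = (((r / 2) * 2 : ℕ) : ZMod r) := by push_cast; ring
      _ = ((r : ℕ) : ZMod r) := by rw [hd]
      _ = 0 := ZMod.natCast_self r
  conv_lhs => rw [← Nat.div_add_mod c 2]
  push_cast
  calc ((r / 2 : ℕ) : ZMod r) * (2 * (c / 2 : ℕ) + (c % 2 : ℕ))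
      = (((r / 2 : ℕ) : ZMod r) * 2) * (c / 2 : ℕ)
        + ((r / 2 : ℕ) : ZMod r) * ((c % 2 : ℕ)) := by ring
    _ = ((r / 2 : ℕ) : ZMod r) * ((c % 2 : ℕ)) := by rw [h2]; ring

/-- the internal residue of a joined assignment is the sum of the child
residues plus `η·χ`, where `χ` is the parity of the number of selected crossing edges. -/
theorem residue_join {V : Type*} [Fintype V] [DecidableEq V]
    (G : SimpleGraph V) (r : ℕ) (hr : 2 ≤ r) (hre : Even r)
    (bc : V → ZMod r) (XL XR : Finset V) (hdisj : Disjoint XL XR)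
    (a : {v // v ∈ XL} → Bool) (b : {v // v ∈ XR} → Bool)
    (z : {v // v ∈ XL ∪ XR} → Bool)
    (hza : ∀ (v : V) (h : v ∈ XL), z ⟨v, Finset.mem_union_left XR h⟩ = a ⟨v, h⟩)
    (hzb : ∀ (v : V) (h : v ∈ XR), z ⟨v, Finset.mem_union_right XL h⟩ = b ⟨v, h⟩)
    (χ : ℕ)
    (hχ : χ = ((Finset.univ.filter (fun p : {v // v ∈ XL} × {v // v ∈ XR} =>
        G.Adj p.1.1 p.2.1 ∧ a p.1 = true ∧ b p.2 = true)).card) % 2) :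
    phiX G r bc (XL ∪ XR) z
      = phiX G r bc XL a + phiX G r bc XR b + ((r / 2 : ℕ) : ZMod r) * (χ : ZMod r) := by
  classical
  set C := ((Finset.univ.filter (fun p : {v // v ∈ XL} × {v // v ∈ XR} =>
      G.Adj p.1.1 p.2.1 ∧ a p.1 = true ∧ b p.2 = true)).card) with hC
  have hm := mX_split G XL XR hdisj a b z hza hzb
  have hs := sum_split bc XL XR hdisj a b z hza hzb
  have hc := eta_mod2 (r := r) hre C
  rw [phiX, phiX, phiX, hs, hm, hχ]
  push_cast
  linear_combination hc
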